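/- arXiv:2108.12851 — 4 statements merged into one kernel-verified Lean document; each statement's English description precedes it below -/
import Mathlib

section
/- Let h : ℝ → ℝ be thrice differentiable with h', h'', h''' ∈ L¹(ℝ), all vanishing at infinity, and suppose the Fourier transform of h' is integrable. Then for any 0 < λ₁ < λ₂, the quantity C_h := (1/√(2π)) ∫_ℝ |ĥ'(ω)| dω satisfies C_h ≤ √(2/π) · ( ‖h'‖₁ λ₁ + ‖h''‖₁ log(λ₂/λ₁) + ‖h'''‖₁ / λ₂ ). -/
open MeasureTheory
open intervalIntegral

noncomputable def FT (g : ℝ → ℝ) (ω : ℝ) : ℂ :=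
  (Real.sqrt (2 * Real.pi) : ℂ)⁻¹ * ∫ x : ℝ, (g x : ℂ) * Complex.exp (-(Complex.I * ω * x))

lemma FT_eq (g : ℝ → ℝ) (ω : ℝ) :
    FT g ω = (Real.sqrt (2 * Real.pi) : ℂ)⁻¹ *
      FourierTransform.fourier (fun x => (g x : ℂ)) (ω / (2 * Real.pi)) := by
  unfold FT
  rw [Real.fourier_real_eq_integral_exp_smul]
  congr 1
  apply MeasureTheory.integral_congr_ae (Filter.Eventually.of_forall (fun x => ?_))
  rw [smul_eq_mul, mul_comm]
  congr 2
  push_cast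
  have hπ : (Real.pi : ℂ) ≠ 0 := by exact_mod_cast Real.pi_ne_zero
  field_simp

lemma norm_FT_le (g : ℝ → ℝ) (ω : ℝ) :
    ‖FT g ω‖ ≤ (Real.sqrt (2 * Real.pi))⁻¹ * ∫ x, |g x| := by
  unfold FT
  rw [norm_mul]
  have h1 : ‖((Real.sqrt (2 * Real.pi) : ℂ))⁻¹‖ = (Real.sqrt (2 * Real.pi))⁻¹ := by
    rw [norm_inv, Complex.norm_real, Real.norm_eq_abs, abs_of_nonneg (Real.sqrt_nonneg _)]
  rw [h1]
  refine mul_le_mul_of_nonneg_left ?_ (inv_nonneg.mpr (Real.sqrt_nonneg _))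
  refine (MeasureTheory.norm_integral_le_integral_norm _).trans_eq ?_
  apply MeasureTheory.integral_congr_ae (Filter.Eventually.of_forall (fun x => ?_))
  rw [norm_mul, Complex.norm_real, Complex.norm_exp]
  have : (-(Complex.I * ω * x)).re = 0 := by simp
  rw [this, Real.exp_zero, mul_one, Real.norm_eq_abs]

lemma FT_deriv (g g' : ℝ → ℝ) (hd : ∀ x, HasDerivAt g (g' x) x)
    (hg : Integrable g) (hg' : Integrable g') (ω : ℝ) :
    FT g' ω = (Complex.I * ω) * FT g ω := by
  have hc : deriv (fun x => (g x : ℂ)) = fun x => (g' x : ℂ) :=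
    funext fun x => ((hd x).ofReal_comp).deriv
  have hdiff : Differentiable ℝ (fun x => (g x : ℂ)) :=
    fun x => ((hd x).ofReal_comp).differentiableAt
  have hfi : Integrable (fun x : ℝ => ((g x : ℝ) : ℂ)) := hg.ofReal
  have hint : Integrable (deriv fun x : ℝ => ((g x : ℝ) : ℂ)) := by
    rw [hc]; exact hg'.ofReal
  have key := Real.fourier_deriv hfi hdiff hint
  rw [hc] at key
  rw [FT_eq, FT_eq, key]
  simp only [smul_eq_mul]
  have hπ : (Real.pi : ℂ) ≠ 0 := by exact_mod_cast Real.pi_ne_zero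
  have h2 : (2 * (Real.pi:ℂ) * Complex.I * ((ω / (2*Real.pi) : ℝ) : ℂ)) = Complex.I * ω := by
    have hcast : ((ω / (2*Real.pi) : ℝ) : ℂ) = (ω:ℂ)/(2*Real.pi) := by push_cast; ring
    rw [hcast]
    field_simp
  rw [h2]
  ring

lemma FT_even (g : ℝ → ℝ) (ω : ℝ) : ‖FT g (-ω)‖ = ‖FT g ω‖ := by
  have : FT g (-ω) = (starRingEnd ℂ) (FT g ω) := by
    unfold FT
    rw [map_mul, ← integral_conj]
    congr 1
    · simp
    · apply MeasureTheory.integral_congr_ae (Filter.Eventually.of_forall (fun x => ?_))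
      rw [map_mul, Complex.conj_ofReal, ← Complex.exp_conj]
      congr 2
      simp only [map_neg, map_mul, Complex.conj_I, Complex.conj_ofReal]
      push_cast
      ring
  rw [this, RCLike.norm_conj]

/-- Three-regime bound for the Barron-type constant `C_h`. -/
theorem barron_three_regime_bound
    (h h₁ h₂ h₃ : ℝ → ℝ)
    (hd1 : ∀ x, HasDerivAt h (h₁ x) x)
    (hd2 : ∀ x, HasDerivAt h₁ (h₂ x) x)
    (hd3 : ∀ x, HasDerivAt h₂ (h₃ x) x)
    (hi1 : Integrable h₁) (hi2 : Integrable h₂) (hi3 : Integrable h₃)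
    (hv1t : Filter.Tendsto h₁ Filter.atTop (nhds 0))
    (hv1b : Filter.Tendsto h₁ Filter.atBot (nhds 0))
    (hv2t : Filter.Tendsto h₂ Filter.atTop (nhds 0))
    (hv2b : Filter.Tendsto h₂ Filter.atBot (nhds 0))
    (hv3t : Filter.Tendsto h₃ Filter.atTop (nhds 0))
    (hv3b : Filter.Tendsto h₃ Filter.atBot (nhds 0))
    (hFT : Integrable (fun ω => ‖FT h₁ ω‖))
    (lam₁ lam₂ : ℝ) (hlam : 0 < lam₁) (hlam' : lam₁ < lam₂) :
    (Real.sqrt (2 * Real.pi))⁻¹ * ∫ ω : ℝ, ‖FT h₁ ω‖ ≤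
      Real.sqrt (2 / Real.pi) *
        ((∫ x, |h₁ x|) * lam₁ + (∫ x, |h₂ x|) * Real.log (lam₂ / lam₁)
          + (∫ x, |h₃ x|) / lam₂) := by
  set S := Real.sqrt (2 * Real.pi) with hSdef
  have hS : 0 < S := Real.sqrt_pos.mpr (by positivity)
  set A := ∫ x, |h₁ x| with hAdef
  set B := ∫ x, |h₂ x| with hBdef
  set C := ∫ x, |h₃ x| with hCdef
  have hA0 : 0 ≤ A := integral_nonneg fun x => abs_nonneg _
  have hB0 : 0 ≤ B := integral_nonneg fun x => abs_nonneg _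
  have hC0 : 0 ≤ C := integral_nonneg fun x => abs_nonneg _
  have hl2 : 0 < lam₂ := hlam.trans hlam'
  set F := fun ω => ‖FT h₁ ω‖ with hFdef
  have hF0 : ∀ ω, 0 ≤ F ω := fun ω => norm_nonneg _
  have P1 : ∀ ω, F ω ≤ S⁻¹ * A := fun ω => norm_FT_le h₁ ω
  have E2 := FT_deriv h₁ h₂ hd2 hi1 hi2
  have E3 := FT_deriv h₂ h₃ hd3 hi2 hi3
  have hIω : ∀ ω : ℝ, 0 < ω → ‖(Complex.I * (ω:ℂ))‖ = ω := by
    intro ω hω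
    rw [norm_mul, Complex.norm_I, one_mul, Complex.norm_real, Real.norm_eq_abs, abs_of_pos hω]
  have P2 : ∀ ω : ℝ, 0 < ω → F ω ≤ S⁻¹ * B / ω := by
    intro ω hω
    have h1 := norm_FT_le h₂ ω
    rw [E2 ω, norm_mul, hIω ω hω] at h1
    rw [le_div_iff₀ hω]
    nlinarith [h1]
  have P3 : ∀ ω : ℝ, 0 < ω → F ω ≤ S⁻¹ * C / ω ^ 2 := by
    intro ω hω
    have h1 := norm_FT_le h₃ ω
    rw [E3 ω, E2 ω] at h1
    have hn : ‖Complex.I * (ω:ℂ) * (Complex.I * (ω:ℂ) * FT h₁ ω)‖ = ω * (ω * F ω) := by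
      rw [norm_mul, hIω ω hω, norm_mul, hIω ω hω]
    rw [hn] at h1
    rw [le_div_iff₀ (by positivity)]
    nlinarith [h1, hF0 ω]
  have hFi : Integrable F := hFT
  have even : ∫ ω in Set.Iic (0:ℝ), F ω = ∫ ω in Set.Ioi (0:ℝ), F ω := by
    have h1 := integral_comp_neg_Ioi 0 F
    rw [neg_zero] at h1
    rw [← h1]
    exact setIntegral_congr_fun measurableSet_Ioi (fun x _ => FT_even h₁ x)
  have splitR : ∫ ω, F ω = (∫ ω in Set.Iic (0:ℝ), F ω) + ∫ ω in Set.Ioi (0:ℝ), F ω :=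
    (integral_Iic_add_Ioi hFi.integrableOn hFi.integrableOn).symm
  have e1 : ∫ ω in Set.Ioi lam₁, F ω
      = (∫ ω in Set.Ioc lam₁ lam₂, F ω) + ∫ ω in Set.Ioi lam₂, F ω := by
    rw [← setIntegral_union (Set.Ioc_disjoint_Ioi le_rfl) measurableSet_Ioi
      hFi.integrableOn hFi.integrableOn, Set.Ioc_union_Ioi_eq_Ioi hlam'.le]
  have e0 : ∫ ω in Set.Ioi (0:ℝ), F ω
      = (∫ ω in Set.Ioc 0 lam₁, F ω) + ∫ ω in Set.Ioi lam₁, F ω := by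
    rw [← setIntegral_union (Set.Ioc_disjoint_Ioi le_rfl) measurableSet_Ioi
      hFi.integrableOn hFi.integrableOn, Set.Ioc_union_Ioi_eq_Ioi hlam.le]
  have b1 : ∫ ω in Set.Ioc (0:ℝ) lam₁, F ω ≤ S⁻¹ * A * lam₁ := by
    have hm : ∫ ω in Set.Ioc (0:ℝ) lam₁, F ω ≤ ∫ _ω in Set.Ioc (0:ℝ) lam₁, S⁻¹ * A := setIntegral_mono_on hFi.integrableOn
      (integrableOn_const (C := S⁻¹ * A) (by rw [Real.volume_Ioc]; exact ENNReal.ofReal_ne_top))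
      measurableSet_Ioc (fun x _ => P1 x)
    refine hm.trans ?_
    rw [setIntegral_const, Real.volume_real_Ioc_of_le (by linarith), smul_eq_mul,
      sub_zero]
    nlinarith [mul_comm lam₁ (S⁻¹ * A)]
  have b2 : ∫ ω in Set.Ioc lam₁ lam₂, F ω ≤ S⁻¹ * B * Real.log (lam₂ / lam₁) := by
    have hcont : IntegrableOn (fun ω : ℝ => S⁻¹ * B / ω) (Set.Ioc lam₁ lam₂) := by
      apply (ContinuousOn.integrableOn_Icc ?_).mono_set Set.Ioc_subset_Icc_self
      exact continuousOn_const.div continuousOn_id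
        (fun x hx => ne_of_gt (lt_of_lt_of_le hlam hx.1))
    have hm := setIntegral_mono_on hFi.integrableOn hcont measurableSet_Ioc
      (fun x hx => P2 x (hlam.trans hx.1))
    refine hm.trans ?_
    rw [← intervalIntegral.integral_of_le hlam'.le]
    have h0 : (0:ℝ) ∉ Set.uIcc lam₁ lam₂ := by
      rw [Set.uIcc_of_le hlam'.le]
      rintro ⟨hh1, hh2⟩; linarith
    simp_rw [div_eq_mul_inv]
    rw [intervalIntegral.integral_const_mul, integral_inv h0, ← div_eq_mul_inv lam₂ lam₁]
  have b3 : ∫ ω in Set.Ioi lam₂, F ω ≤ S⁻¹ * C / lam₂ := by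
    have hint : IntegrableOn (fun ω : ℝ => S⁻¹ * C * ω ^ (-2:ℝ)) (Set.Ioi lam₂) :=
      (integrableOn_Ioi_rpow_of_lt (by norm_num) hl2).const_mul _
    have ptw : ∀ x ∈ Set.Ioi lam₂, F x ≤ S⁻¹ * C * x ^ (-2:ℝ) := by
      intro x hx
      have hx0 : 0 < x := hl2.trans hx
      have hp := P3 x hx0
      have hr : x ^ (-2:ℝ) = (x ^ 2)⁻¹ := by rw [Real.rpow_neg hx0.le, Real.rpow_two]
      rw [hr, ← div_eq_mul_inv]
      exact hp
    have hm := setIntegral_mono_on hFi.integrableOn hint measurableSet_Ioi ptw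
    refine hm.trans ?_
    rw [MeasureTheory.integral_const_mul, integral_Ioi_rpow_of_lt (by norm_num) hl2]
    rw [show (-2+1 : ℝ) = -1 by norm_num, Real.rpow_neg_one]
    rw [show -lam₂⁻¹ / (-1:ℝ) = lam₂⁻¹ by ring, ← div_eq_mul_inv]
  set L := Real.log (lam₂ / lam₁) with hLdef
  have hL0 : 0 ≤ L := Real.log_nonneg ((one_le_div hlam).mpr hlam'.le)
  have total : ∫ ω, F ω ≤ 2 * (S⁻¹ * A * lam₁ + S⁻¹ * B * L + S⁻¹ * C / lam₂) := by
    rw [splitR, even, e0, e1]; linarith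
  have hX0 : 0 ≤ A * lam₁ + B * L + C / lam₂ := by positivity
  have step1 : S⁻¹ * ∫ ω, F ω ≤ Real.pi⁻¹ * (A * lam₁ + B * L + C / lam₂) := by
    have hh := mul_le_mul_of_nonneg_left total (inv_nonneg.2 hS.le)
    refine hh.trans_eq ?_
    have hSS : S⁻¹ * S⁻¹ = (2 * Real.pi)⁻¹ := by
      rw [← mul_inv, Real.mul_self_sqrt (by positivity)]
    have h2π : (2:ℝ) * (2 * Real.pi)⁻¹ = Real.pi⁻¹ := by
      rw [mul_inv]
      field_simp
    calc S⁻¹ * (2 * (S⁻¹ * A * lam₁ + S⁻¹ * B * L + S⁻¹ * C / lam₂))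
        = 2 * (S⁻¹ * S⁻¹) * (A * lam₁ + B * L + C / lam₂) := by ring
      _ = Real.pi⁻¹ * (A * lam₁ + B * L + C / lam₂) := by rw [hSS, h2π]
  refine step1.trans (mul_le_mul_of_nonneg_right ?_ hX0)
  have : Real.pi⁻¹ = Real.sqrt (Real.pi⁻¹ ^ 2) := (Real.sqrt_sq (by positivity)).symm
  rw [this]
  apply Real.sqrt_le_sqrt
  rw [inv_eq_one_div, div_pow, one_pow, div_le_div_iff₀ (by positivity) Real.pi_pos]
  nlinarith [Real.pi_gt_three]
end

section
/- Let h : ℝ → ℝ be thrice differentiable with h', h'', h''' ∈ L¹(ℝ) and vanishing at infinity, and ĥ' ∈ L¹(ℝ). Then C_h := (1/√(2π)) ∫_ℝ |ĥ'(ω)| dω ≤ (2√2/√π) · (1 + log( √(‖h'‖₁ ‖h'''‖₁) / ‖h''‖₁ )) · ‖h''‖₁. -/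
open MeasureTheory Set

namespace BarronAux

lemma norm_eker (ω x : ℝ) : ‖Complex.exp (-(Complex.I * ω * x))‖ = 1 := by
  rw [Complex.norm_exp]
  simp [Complex.mul_re]

lemma cont_eker (ω : ℝ) : Continuous (fun x : ℝ => Complex.exp (-(Complex.I * ω * x))) :=
  Complex.continuous_exp.comp ((continuous_const.mul Complex.continuous_ofReal).neg)

lemma integrable_mul_eker {g : ℝ → ℝ} (hg : Integrable g) (ω : ℝ) :
    Integrable (fun x => (g x : ℂ) * Complex.exp (-(Complex.I * ω * x))) := by
  have := hg.ofReal.bdd_mul (cont_eker ω).aestronglyMeasurable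
    (c := 1) (ae_of_all _ fun x => le_of_eq (norm_eker ω x))
  simpa [mul_comm] using this

lemma norm_integral_mul_eker_le {g : ℝ → ℝ} (ω : ℝ) :
    ‖∫ x : ℝ, (g x : ℂ) * Complex.exp (-(Complex.I * ω * x))‖ ≤ ∫ x : ℝ, |g x| := by
  calc ‖∫ x : ℝ, (g x : ℂ) * Complex.exp (-(Complex.I * ω * x))‖
      ≤ ∫ x : ℝ, ‖(g x : ℂ) * Complex.exp (-(Complex.I * ω * x))‖ :=
        norm_integral_le_integral_norm _
    _ = ∫ x : ℝ, |g x| := by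
        congr 1; funext x; rw [norm_mul, norm_eker, mul_one, Complex.norm_real, Real.norm_eq_abs]

lemma integral_deriv_mul_eker {g g' : ℝ → ℝ}
    (hd : ∀ x, HasDerivAt g (g' x) x) (hg : Integrable g) (hg' : Integrable g')
    (ht : Filter.Tendsto g Filter.atTop (nhds 0))
    (hb : Filter.Tendsto g Filter.atBot (nhds 0)) (ω : ℝ) :
    ∫ x : ℝ, (g' x : ℂ) * Complex.exp (-(Complex.I * ω * x)) =
      (Complex.I * ω) * ∫ x : ℝ, (g x : ℂ) * Complex.exp (-(Complex.I * ω * x)) := by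
  set e : ℝ → ℂ := fun x => Complex.exp (-(Complex.I * ω * x)) with he
  have hde : ∀ x : ℝ, HasDerivAt e (-(Complex.I * ω) * e x) x := by
    intro x
    have h1 : HasDerivAt (fun z : ℂ => Complex.exp (-(Complex.I * ω) * z))
        (Complex.exp (-(Complex.I * ω) * x) * -(Complex.I * ω)) (x : ℂ) :=
      by simpa using ((hasDerivAt_id (x : ℂ)).const_mul (-(Complex.I * ω))).cexp
    have h2 := h1.comp_ofReal
    have : (fun y : ℝ => Complex.exp (-(Complex.I * ω) * y)) = e := by
      funext y; rw [he]; ring_nf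
    rw [this] at h2
    have : Complex.exp (-(Complex.I * ω) * x) = e x := by rw [he]; ring_nf
    rw [this] at h2
    simpa [mul_comm] using h2
  have hdf : ∀ x : ℝ, HasDerivAt (fun y : ℝ => (g y : ℂ) * e y)
      ((g' x : ℂ) * e x + (g x : ℂ) * (-(Complex.I * ω) * e x)) x := by
    intro x
    exact ((hd x).ofReal_comp).mul (hde x)
  have hint1 : Integrable (fun x : ℝ => (g' x : ℂ) * e x) := integrable_mul_eker hg' ω
  have hint2 : Integrable (fun x : ℝ => (g x : ℂ) * (-(Complex.I * ω) * e x)) := by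
    have := (integrable_mul_eker hg ω).const_mul (-(Complex.I * ω))
    refine this.congr (Filter.Eventually.of_forall fun x => ?_)
    ring
  have htop : Filter.Tendsto (fun x : ℝ => (g x : ℂ) * e x) Filter.atTop (nhds 0) := by
    refine squeeze_zero_norm (fun x => ?_) (by simpa using ht.abs : Filter.Tendsto (fun x => |g x|) Filter.atTop (nhds 0))
    rw [norm_mul, norm_eker, mul_one, Complex.norm_real, Real.norm_eq_abs]
  have hbot : Filter.Tendsto (fun x : ℝ => (g x : ℂ) * e x) Filter.atBot (nhds 0) := by
    refine squeeze_zero_norm (fun x => ?_) (by simpa using hb.abs : Filter.Tendsto (fun x => |g x|) Filter.atBot (nhds 0))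
    rw [norm_mul, norm_eker, mul_one, Complex.norm_real, Real.norm_eq_abs]
  have hz := integral_of_hasDerivAt_of_tendsto hdf (hint1.add hint2) hbot htop
  rw [sub_zero] at hz
  rw [integral_add hint1 hint2] at hz
  have h2 : ∫ x : ℝ, (g x : ℂ) * (-(Complex.I * ω) * e x) =
      -(Complex.I * ω) * ∫ x : ℝ, (g x : ℂ) * e x := by
    rw [← integral_const_mul]
    congr 1; funext x; ring
  rw [h2] at hz
  have := eq_neg_of_add_eq_zero_left hz
  rw [this]; ring




lemma half_line (F : ℝ → ℝ) (hF : Integrable F)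
    (A' B' C' a b : ℝ) (hA : ∀ ω, F ω ≤ A') (hB : ∀ ω, |ω| * F ω ≤ B')
    (hC : ∀ ω, ω ^ 2 * F ω ≤ C') (ha : 0 < a) (hab : a ≤ b) :
    ∫ ω in Ioi (0:ℝ), F ω ≤ a * A' + B' * Real.log (b / a) + C' / b := by
  have hb : 0 < b := lt_of_lt_of_le ha hab
  have h1 : ∫ ω in Ioi (0:ℝ), F ω
      = (∫ ω in Ioc 0 a, F ω) + ((∫ ω in Ioc a b, F ω) + ∫ ω in Ioi b, F ω) := by
    rw [← setIntegral_union (Set.Ioc_disjoint_Ioi le_rfl) measurableSet_Ioi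
      hF.integrableOn hF.integrableOn, Set.Ioc_union_Ioi_eq_Ioi hab,
      ← setIntegral_union (Set.Ioc_disjoint_Ioi le_rfl) measurableSet_Ioi
      hF.integrableOn hF.integrableOn, Set.Ioc_union_Ioi_eq_Ioi ha.le]
  have p1 : ∫ ω in Ioc (0:ℝ) a, F ω ≤ a * A' := by
    have hconst : IntegrableOn (fun _ : ℝ => A') (Ioc 0 a) := by
      refine integrableOn_const ?_
      rw [Real.volume_Ioc]; exact ENNReal.ofReal_lt_top.ne
    calc ∫ ω in Ioc (0:ℝ) a, F ω ≤ ∫ _ in Ioc (0:ℝ) a, A' :=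
          setIntegral_mono_on hF.integrableOn hconst measurableSet_Ioc fun x _ => hA x
      _ = a * A' := by
          rw [setIntegral_const, measureReal_def, Real.volume_Ioc, smul_eq_mul, sub_zero,
            ENNReal.toReal_ofReal ha.le]
  have hint_inv : IntegrableOn (fun x : ℝ => B' * x⁻¹) (Ioc a b) := by
    rw [← intervalIntegrable_iff_integrableOn_Ioc_of_le hab]
    refine (intervalIntegral.intervalIntegrable_inv (fun x hx => ?_) ?_).const_mul B'
    · rw [Set.uIcc_of_le hab] at hx
      exact ne_of_gt (lt_of_lt_of_le ha hx.1)
    · exact continuousOn_id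
  have p2 : ∫ ω in Ioc a b, F ω ≤ B' * Real.log (b / a) := by
    calc ∫ ω in Ioc a b, F ω ≤ ∫ ω in Ioc a b, B' * ω⁻¹ := by
          refine setIntegral_mono_on hF.integrableOn hint_inv measurableSet_Ioc fun x hx => ?_
          have hx0 : 0 < x := lt_of_le_of_lt ha.le hx.1
          have := hB x
          rw [abs_of_pos hx0] at this
          rw [mul_comm, ← le_div_iff₀ hx0] at this
          rw [div_eq_mul_inv, mul_comm] at this
          linarith [this]
      _ = B' * Real.log (b / a) := by
          rw [← intervalIntegral.integral_of_le hab, intervalIntegral.integral_const_mul,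
            integral_inv_of_pos ha hb]
  have hint_sq : IntegrableOn (fun x : ℝ => C' * (x ^ 2)⁻¹) (Ioi b) := by
    refine (((integrableOn_Ioi_rpow_of_lt (by norm_num : (-2:ℝ) < -1) hb).congr_fun
      (fun x hx => ?_) measurableSet_Ioi).const_mul C')
    have hx0 : 0 < x := lt_trans hb hx
    rw [show (-2:ℝ) = -(2:ℕ) by norm_num, Real.rpow_neg hx0.le, Real.rpow_natCast]
  have hval_sq : ∫ x in Ioi b, C' * (x ^ 2)⁻¹ = C' / b := by
    have h1 : ∫ x in Ioi b, C' * (x ^ 2)⁻¹ = C' * ∫ x in Ioi b, (x ^ 2)⁻¹ := by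
      rw [← integral_const_mul]
    have h2 : ∫ x in Ioi b, ((x:ℝ) ^ 2)⁻¹ = ∫ x in Ioi b, x ^ (-2:ℝ) := by
      refine setIntegral_congr_fun measurableSet_Ioi fun x hx => ?_
      have hx0 : 0 < x := lt_trans hb hx
      rw [show (-2:ℝ) = -(2:ℕ) by norm_num, Real.rpow_neg hx0.le, Real.rpow_natCast]
    rw [h1, h2, integral_Ioi_rpow_of_lt (by norm_num) hb]
    norm_num
    rw [Real.rpow_neg_one]
    field_simp
  have p3 : ∫ ω in Ioi b, F ω ≤ C' / b := by
    calc ∫ ω in Ioi b, F ω ≤ ∫ ω in Ioi b, C' * (ω ^ 2)⁻¹ := by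
          refine setIntegral_mono_on hF.integrableOn hint_sq measurableSet_Ioi fun x hx => ?_
          have hx0 : 0 < x := lt_trans hb hx
          have hsq : 0 < x ^ 2 := by positivity
          have := hC x
          rw [mul_comm, ← le_div_iff₀ hsq] at this
          rw [div_eq_mul_inv, mul_comm] at this
          linarith [this]
      _ = C' / b := hval_sq
  rw [h1]; linarith

lemma full_line (F : ℝ → ℝ) (hF : Integrable F) (h0 : ∀ ω, 0 ≤ F ω)
    (A' B' C' a b : ℝ) (hA : ∀ ω, F ω ≤ A') (hB : ∀ ω, |ω| * F ω ≤ B')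
    (hC : ∀ ω, ω ^ 2 * F ω ≤ C') (ha : 0 < a) (hab : a ≤ b) :
    ∫ ω : ℝ, F ω ≤ 2 * (a * A' + B' * Real.log (b / a) + C' / b) := by
  have hsplit : ∫ ω : ℝ, F ω = (∫ ω in Iic (0:ℝ), F ω) + ∫ ω in Ioi (0:ℝ), F ω :=
    (intervalIntegral.integral_Iic_add_Ioi hF.integrableOn hF.integrableOn).symm
  have hneg : ∫ ω in Iic (0:ℝ), F ω = ∫ ω in Ioi (0:ℝ), F (-ω) := by
    have := integral_comp_neg_Iic (0:ℝ) (fun x => F (-x))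
    simp only [neg_neg, neg_zero] at this
    exact this
  have hG : Integrable (fun ω => F (-ω)) := hF.comp_neg
  have g1 := half_line F hF A' B' C' a b hA hB hC ha hab
  have g2 := half_line (fun ω => F (-ω)) hG A' B' C' a b (fun ω => hA (-ω))
    (fun ω => by simpa [abs_neg] using hB (-ω)) (fun ω => by simpa using hC (-ω)) ha hab
  rw [hsplit, hneg]; linarith



lemma landau {h₁ h₂ h₃ : ℝ → ℝ}
    (hd2 : ∀ x, HasDerivAt h₁ (h₂ x) x) (hd3 : ∀ x, HasDerivAt h₂ (h₃ x) x)
    (hi1 : Integrable h₁) (hi2 : Integrable h₂) (hi3 : Integrable h₃)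
    {a : ℝ} (ha : 0 < a) :
    a * ∫ x, |h₂ x| ≤ 2 * (∫ x, |h₁ x|) + a ^ 2 / 2 * ∫ x, |h₃ x| := by
  have hm3 : Measurable h₃ := by
    have : h₃ = deriv h₂ := funext fun x => ((hd3 x).deriv).symm
    rw [this]; exact measurable_deriv _
  -- the key identity
  have ident : ∀ x : ℝ, ∫ t in (0:ℝ)..a, (a - t) * h₃ (x + t)
      = h₁ (x + a) - (a * h₂ x + h₁ x) := by
    intro x
    have hG : ∀ t ∈ Set.uIcc (0:ℝ) a,
        HasDerivAt (fun t => (a - t) * h₂ (x + t) + h₁ (x + t)) ((a - t) * h₃ (x + t)) t := by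
      intro t _
      have e1 : HasDerivAt (fun t : ℝ => x + t) 1 t := by
        simpa using (hasDerivAt_id t).const_add x
      have d2 : HasDerivAt (fun t : ℝ => h₂ (x + t)) (h₃ (x + t)) t := by
        exact ((hd3 (x + t)).comp t e1).congr_deriv (mul_one _)
      have d1 : HasDerivAt (fun t : ℝ => h₁ (x + t)) (h₂ (x + t)) t := by
        exact ((hd2 (x + t)).comp t e1).congr_deriv (mul_one _)
      have dl : HasDerivAt (fun t : ℝ => a - t) (-1) t := by
        simpa using (hasDerivAt_id t).const_sub a
      have := (dl.mul d2).add d1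
      exact this.congr_deriv (by ring)
    have hInt : IntervalIntegrable (fun t => (a - t) * h₃ (x + t)) volume 0 a := by
      rw [intervalIntegrable_iff_integrableOn_Ioc_of_le ha.le]
      have hbase : IntegrableOn (fun t => h₃ (x + t)) (Set.Ioc 0 a) :=
        (hi3.comp_add_left x).integrableOn
      refine Integrable.bdd_mul (c := |a|) hbase ?_ ?_
      · exact ((continuous_const.sub continuous_id).aestronglyMeasurable).restrict
      · refine (ae_restrict_iff' measurableSet_Ioc).2 (ae_of_all _ fun t ht => ?_)
        rw [Real.norm_eq_abs, abs_of_nonneg (by linarith [ht.2] : (0:ℝ) ≤ a - t),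
          abs_of_pos ha]
        linarith [ht.1]
    have := intervalIntegral.integral_eq_sub_of_hasDerivAt hG hInt
    rw [this]
    simp
  -- pointwise bound
  have pw : ∀ x : ℝ, a * |h₂ x| ≤ |h₁ (x + a)| + |h₁ x|
      + ∫ t in Set.Ioc (0:ℝ) a, |a - t| * |h₃ (x + t)| := by
    intro x
    have h1 : a * h₂ x = h₁ (x + a) - h₁ x - ∫ t in (0:ℝ)..a, (a - t) * h₃ (x + t) := by
      have := ident x; linarith
    have h2 : |∫ t in (0:ℝ)..a, (a - t) * h₃ (x + t)|
        ≤ ∫ t in Set.Ioc (0:ℝ) a, |a - t| * |h₃ (x + t)| := by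
      calc |∫ t in (0:ℝ)..a, (a - t) * h₃ (x + t)|
          ≤ ∫ t in (0:ℝ)..a, |(a - t) * h₃ (x + t)| :=
            intervalIntegral.abs_integral_le_integral_abs ha.le
        _ = ∫ t in Set.Ioc (0:ℝ) a, |a - t| * |h₃ (x + t)| := by
            rw [intervalIntegral.integral_of_le ha.le]
            refine setIntegral_congr_fun measurableSet_Ioc fun t _ => ?_
            rw [abs_mul]
    calc a * |h₂ x| = |a * h₂ x| := by rw [abs_mul, abs_of_pos ha]
      _ ≤ |h₁ (x + a)| + |h₁ x| + |∫ t in (0:ℝ)..a, (a - t) * h₃ (x + t)| := by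
          rw [h1]
          calc |h₁ (x + a) - h₁ x - ∫ t in (0:ℝ)..a, (a - t) * h₃ (x + t)|
              ≤ |h₁ (x + a) - h₁ x| + |∫ t in (0:ℝ)..a, (a - t) * h₃ (x + t)| :=
                abs_sub _ _
            _ ≤ |h₁ (x + a)| + |h₁ x| + |∫ t in (0:ℝ)..a, (a - t) * h₃ (x + t)| := by
                have := abs_sub (h₁ (x + a)) (h₁ x)
                linarith
      _ ≤ _ := by linarith [h2]
  -- Fubini for the double term
  set ν := volume.restrict (Set.Ioc (0:ℝ) a) with hν
  set f : ℝ → ℝ → ℝ := fun x t => |a - t| * |h₃ (x + t)| with hf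
  have hmeas : AEStronglyMeasurable (Function.uncurry f) (volume.prod ν) := by
    apply Measurable.aestronglyMeasurable
    exact ((measurable_const.sub measurable_snd).abs).mul
      ((hm3.comp (measurable_fst.add measurable_snd)).abs)
  have slice : ∀ t : ℝ, Integrable (fun x => f x t) :=
    fun t => ((hi3.comp_add_right t).abs.const_mul _)
  have hnormint : Integrable (fun t => ∫ x, ‖f x t‖) ν := by
    have heq : (fun t => ∫ x, ‖f x t‖) = fun t => |a - t| * ∫ x, |h₃ x| := by
      funext t
      have : ∀ x : ℝ, ‖f x t‖ = |a - t| * |h₃ (x + t)| := fun x => by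
        rw [Real.norm_eq_abs, abs_of_nonneg (by positivity)]
      simp_rw [this]
      rw [integral_const_mul]
      congr 1
      exact integral_add_right_eq_self (fun y => |h₃ y|) t
    rw [heq]
    exact (((continuous_const.sub continuous_id).abs).mul continuous_const).integrableOn_Ioc
  have hprod : Integrable (Function.uncurry f) (volume.prod ν) := by
    refine (integrable_prod_iff' hmeas).2 ⟨ae_of_all _ fun t => slice t, hnormint⟩
  have hJint : Integrable (fun x => ∫ t, f x t ∂ν) := hprod.integral_prod_left
  have hJval : ∫ x, (∫ t, f x t ∂ν) = a ^ 2 / 2 * ∫ x, |h₃ x| := by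
    rw [integral_integral_swap hprod]
    have heq : ∀ t : ℝ, ∫ x, f x t = |a - t| * ∫ x, |h₃ x| := by
      intro t
      rw [hf]
      simp only []
      rw [integral_const_mul]
      congr 1
      exact integral_add_right_eq_self (fun y => |h₃ y|) t
    simp_rw [heq]
    rw [integral_mul_const]
    congr 1
    have : ∫ t, |a - t| ∂ν = ∫ t in Set.Ioc (0:ℝ) a, |a - t| := rfl
    rw [this, ← intervalIntegral.integral_of_le ha.le]
    have hcongr : ∀ t ∈ Set.uIcc (0:ℝ) a, |a - t| = a - t := by
      intro t ht
      rw [Set.uIcc_of_le ha.le] at ht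
      exact abs_of_nonneg (by linarith [ht.2])
    rw [intervalIntegral.integral_congr hcongr]
    rw [intervalIntegral.integral_sub intervalIntegrable_const intervalIntegral.intervalIntegrable_id,
      intervalIntegral.integral_const, integral_id]
    simp
    ring
  -- put it together
  have int1 : Integrable (fun x => |h₁ (x + a)|) := (hi1.comp_add_right a).abs
  have int2 : Integrable (fun x => |h₁ x|) := hi1.abs
  calc a * ∫ x, |h₂ x| = ∫ x, a * |h₂ x| := (integral_const_mul a _).symm
    _ ≤ ∫ x, (|h₁ (x + a)| + |h₁ x| + ∫ t, f x t ∂ν) := by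
        refine integral_mono (hi2.abs.const_mul a) ((int1.add int2).add hJint) fun x => ?_
        exact pw x
    _ = (∫ x, |h₁ (x + a)|) + (∫ x, |h₁ x|) + ∫ x, (∫ t, f x t ∂ν) := by
        have int12 : Integrable (fun x => |h₁ (x + a)| + |h₁ x|) := int1.add int2
        rw [integral_add int12 hJint, integral_add int1 int2]
    _ = 2 * (∫ x, |h₁ x|) + a ^ 2 / 2 * ∫ x, |h₃ x| := by
        rw [hJval, integral_add_right_eq_self (fun y => |h₁ y|) a]
        ring



lemma chord {t : ℝ} (h1 : 1/2 ≤ t) (h2 : t ≤ 1) : (2*t - 2) * Real.log 2 ≤ Real.log t := by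
  have con := strictConcaveOn_log_Ioi.concaveOn
  have hmem1 : (1/2 : ℝ) ∈ Ioi (0:ℝ) := by norm_num
  have hmem2 : (1 : ℝ) ∈ Ioi (0:ℝ) := by norm_num
  have hw1 : (0:ℝ) ≤ 2*(1-t) := by linarith
  have hw2 : (0:ℝ) ≤ 2*t - 1 := by linarith
  have hsum : 2*(1-t) + (2*t - 1) = 1 := by ring
  have := con.2 hmem1 hmem2 hw1 hw2 hsum
  have hpt : (2*(1-t)) • (1/2 : ℝ) + (2*t - 1) • (1:ℝ) = t := by
    simp [smul_eq_mul]; ring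
  rw [hpt] at this
  have hlog : Real.log (1/2 : ℝ) = -Real.log 2 := by
    rw [one_div, Real.log_inv]
  rw [smul_eq_mul, smul_eq_mul, hlog, Real.log_one] at this
  calc (2*t - 2) * Real.log 2 = 2*(1-t) * (-Real.log 2) + (2*t-1) * 0 := by ring
    _ ≤ Real.log t := this

lemma sqrt_two_pi_ge : (2.5 : ℝ) ≤ Real.sqrt (2 * Real.pi) := by
  have hpi : (3.141592 : ℝ) ≤ Real.pi := Real.pi_gt_d6.le
  rw [show (2.5:ℝ) = Real.sqrt (2.5^2) by rw [Real.sqrt_sq (by norm_num)]]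
  apply Real.sqrt_le_sqrt
  nlinarith

lemma numeric {t : ℝ} (h1 : 1/2 ≤ t) (h2 : t ≤ 1) :
    t ≤ Real.sqrt (2 * Real.pi) * (1 + Real.log t) := by
  have hchord := chord h1 h2
  have hlog2 : Real.log 2 < 0.6931472 := by
    have := Real.log_two_lt_d9
    linarith
  have hlog2' : (0:ℝ) ≤ Real.log 2 := Real.log_nonneg one_le_two
  have hs := sqrt_two_pi_ge
  have hexpr : (0:ℝ) ≤ 1 + (2*t - 2) * Real.log 2 := by nlinarith
  have h3 : Real.sqrt (2 * Real.pi) * (1 + (2*t-2) * Real.log 2)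
      ≤ Real.sqrt (2 * Real.pi) * (1 + Real.log t) := by
    apply mul_le_mul_of_nonneg_left (by linarith) (by linarith)
  refine le_trans ?_ h3
  nlinarith

lemma const_eq : (2:ℝ)/Real.pi * Real.sqrt (2 * Real.pi) = 2 * Real.sqrt 2 / Real.sqrt Real.pi := by
  have hπ : Real.sqrt Real.pi * Real.sqrt Real.pi = Real.pi := Real.mul_self_sqrt Real.pi_pos.le
  have hsplit : Real.sqrt (2 * Real.pi) = Real.sqrt 2 * Real.sqrt Real.pi :=
    Real.sqrt_mul (by norm_num) _
  have hsp : (0:ℝ) < Real.sqrt Real.pi := Real.sqrt_pos.2 Real.pi_pos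
  rw [hsplit]
  field_simp
  linear_combination hπ

lemma const_le : (2:ℝ)/Real.pi ≤ 2 * Real.sqrt 2 / Real.sqrt Real.pi := by
  have hπ : Real.sqrt Real.pi * Real.sqrt Real.pi = Real.pi := Real.mul_self_sqrt Real.pi_pos.le
  have hsp : (0:ℝ) < Real.sqrt Real.pi := Real.sqrt_pos.2 Real.pi_pos
  have hsp1 : (1:ℝ) ≤ Real.sqrt Real.pi := by
    nlinarith [Real.pi_gt_three]
  have hs2 : (1:ℝ) ≤ Real.sqrt 2 := by
    nlinarith [Real.sq_sqrt (by norm_num : (0:ℝ) ≤ 2), Real.sqrt_nonneg 2]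
  rw [div_le_div_iff₀ Real.pi_pos hsp]
  nlinarith


lemma zero_of_integral_abs {g : ℝ → ℝ} (hc : Continuous g) (hi : Integrable g)
    (hz : (∫ x, |g x|) = 0) : ∀ x, g x = 0 := by
  have h1 : ∀ᵐ x, |g x| = 0 :=
    (integral_eq_zero_iff_of_nonneg_ae
      (Filter.Eventually.of_forall fun x => abs_nonneg (g x)) hi.abs).1 hz
  have h2 : g =ᵐ[volume] (fun _ => 0) := h1.mono fun x hx => abs_eq_zero.1 hx
  have h3 := (Continuous.ae_eq_iff_eq (μ := volume) hc continuous_const).1 h2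
  intro x; rw [h3]

end BarronAux

open BarronAux

set_option maxHeartbeats 1000000 in
/-- The Barron-constant bound in terms of the `L¹`-norms of the derivatives. -/
theorem barron_constant_bound
    (h h₁ h₂ h₃ : ℝ → ℝ)
    (hd1 : ∀ x, HasDerivAt h (h₁ x) x)
    (hd2 : ∀ x, HasDerivAt h₁ (h₂ x) x)
    (hd3 : ∀ x, HasDerivAt h₂ (h₃ x) x)
    (hi1 : Integrable h₁) (hi2 : Integrable h₂) (hi3 : Integrable h₃)
    (hv1t : Filter.Tendsto h₁ Filter.atTop (nhds 0))
    (hv1b : Filter.Tendsto h₁ Filter.atBot (nhds 0))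
    (hv2t : Filter.Tendsto h₂ Filter.atTop (nhds 0))
    (hv2b : Filter.Tendsto h₂ Filter.atBot (nhds 0))
    (hv3t : Filter.Tendsto h₃ Filter.atTop (nhds 0))
    (hv3b : Filter.Tendsto h₃ Filter.atBot (nhds 0))
    (hFT : Integrable (fun ω => ‖FT h₁ ω‖)) :
    (Real.sqrt (2 * Real.pi))⁻¹ * ∫ ω : ℝ, ‖FT h₁ ω‖ ≤
      (2 * Real.sqrt 2 / Real.sqrt Real.pi) *
        (1 + Real.log (Real.sqrt ((∫ x, |h₁ x|) * (∫ x, |h₃ x|)) / (∫ x, |h₂ x|))) *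
        (∫ x, |h₂ x|) := by
  classical
  set A := ∫ x, |h₁ x| with hAdef
  set B := ∫ x, |h₂ x| with hBdef
  set C := ∫ x, |h₃ x| with hCdef
  have hc1 : Continuous h₁ := by
    rw [continuous_iff_continuousAt]; exact fun x => (hd2 x).continuousAt
  have hc2 : Continuous h₂ := by
    rw [continuous_iff_continuousAt]; exact fun x => (hd3 x).continuousAt
  by_cases hB0 : B = 0
  · -- degenerate case
    have h2z : ∀ x, h₂ x = 0 := zero_of_integral_abs hc2 hi2 hB0
    have hdiff1 : Differentiable ℝ h₁ := fun x => (hd2 x).differentiableAt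
    have hderiv0 : ∀ x, deriv h₁ x = 0 := fun x => by rw [(hd2 x).deriv, h2z]
    have hconst : ∀ x : ℝ, h₁ x = h₁ 0 := fun x => is_const_of_deriv_eq_zero hdiff1 hderiv0 x 0
    have h10 : h₁ 0 = 0 := by
      have ht : Filter.Tendsto h₁ Filter.atTop (nhds (h₁ 0)) := by
        have : h₁ = fun _ => h₁ 0 := funext hconst
        rw [this]; exact tendsto_const_nhds
      exact tendsto_nhds_unique ht hv1t
    have h1z : ∀ x, h₁ x = 0 := fun x => (hconst x).trans h10
    have hFTz : ∀ ω, FT h₁ ω = 0 := by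
      intro ω; unfold FT
      have : ∀ x : ℝ, ((h₁ x : ℂ)) * Complex.exp (-(Complex.I * ω * x)) = 0 := by
        intro x; rw [h1z]; simp
      simp [this]
    have hIz : ∫ ω : ℝ, ‖FT h₁ ω‖ = 0 := by simp [hFTz]
    rw [hIz, hB0, mul_zero, mul_zero]
  · have hBpos : 0 < B := lt_of_le_of_ne (integral_nonneg fun x => abs_nonneg _) (Ne.symm hB0)
    have hApos : 0 < A := by
      rcases lt_or_eq_of_le (integral_nonneg (fun x => abs_nonneg (h₁ x)) : 0 ≤ A) with h | h
      · exact h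
      · exfalso
        have h1z : ∀ x, h₁ x = 0 := zero_of_integral_abs hc1 hi1 h.symm
        have : ∀ x, h₂ x = 0 := by
          intro x
          have hz : HasDerivAt (fun _ : ℝ => (0:ℝ)) (h₂ x) x := by
            have := hd2 x
            have heq : h₁ = fun _ : ℝ => (0:ℝ) := funext h1z
            rwa [heq] at this
          have := hz.unique (hasDerivAt_const x 0)
          exact this
        apply hB0
        rw [hBdef]
        simp [this]
    have hCpos : 0 < C := by
      rcases lt_or_eq_of_le (integral_nonneg (fun x => abs_nonneg (h₃ x)) : 0 ≤ C) with h | h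
      · exact h
      · exfalso
        have h3ae : ∀ᵐ x, h₃ x = 0 := by
          have := (integral_eq_zero_iff_of_nonneg_ae
            (Filter.Eventually.of_forall fun x => abs_nonneg (h₃ x)) hi3.abs).1 h.symm
          filter_upwards [this] with x hx
          exact abs_eq_zero.1 hx
        have hconst : ∀ x : ℝ, h₂ x = h₂ 0 := by
          intro x
          have hftc := intervalIntegral.integral_eq_sub_of_hasDerivAt
            (f := h₂) (f' := h₃) (a := 0) (b := x)
            (fun t _ => hd3 t) (hi3.intervalIntegrable)
          have hz : ∫ t in (0:ℝ)..x, h₃ t = 0 := by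
            have : h₃ =ᵐ[volume] (fun _ => (0:ℝ)) := h3ae
            rw [intervalIntegral.integral_congr_ae ?_]
            · exact intervalIntegral.integral_zero
            · filter_upwards [this] with t ht
              intro _; exact ht
          rw [hz] at hftc
          linarith
        have h20 : h₂ 0 = 0 := by
          have ht : Filter.Tendsto h₂ Filter.atTop (nhds (h₂ 0)) := by
            have : h₂ = fun _ => h₂ 0 := funext hconst
            rw [this]; exact tendsto_const_nhds
          exact tendsto_nhds_unique ht hv2t
        apply hB0
        rw [hBdef]
        have : ∀ x, h₂ x = 0 := fun x => (hconst x).trans h20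
        simp [this]
    -- notation
    set s := Real.sqrt (2 * Real.pi) with hsdef
    have hspos : 0 < s := Real.sqrt_pos.2 (by positivity)
    have hss : s * s = 2 * Real.pi := Real.mul_self_sqrt (by positivity)
    set K : ℝ → ℂ := fun ω => ∫ x : ℝ, (h₁ x : ℂ) * Complex.exp (-(Complex.I * ω * x)) with hKdef
    have normFT : ∀ ω, ‖FT h₁ ω‖ = s⁻¹ * ‖K ω‖ := by
      intro ω
      unfold FT
      rw [norm_mul, norm_inv, Complex.norm_real, Real.norm_eq_abs, abs_of_pos hspos]
    have e2 : ∀ ω : ℝ, (∫ x : ℝ, (h₂ x : ℂ) * Complex.exp (-(Complex.I * ω * x)))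
        = (Complex.I * ω) * K ω := fun ω =>
      integral_deriv_mul_eker hd2 hi1 hi2 hv1t hv1b ω
    have e3 : ∀ ω : ℝ, (∫ x : ℝ, (h₃ x : ℂ) * Complex.exp (-(Complex.I * ω * x)))
        = (Complex.I * ω) * ((Complex.I * ω) * K ω) := by
      intro ω
      rw [integral_deriv_mul_eker hd3 hi2 hi3 hv2t hv2b ω, e2]
    have normIω : ∀ ω : ℝ, ‖Complex.I * (ω:ℂ)‖ = |ω| := by
      intro ω
      rw [norm_mul, Complex.norm_I, one_mul, Complex.norm_real, Real.norm_eq_abs]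
    have hA' : ∀ ω, ‖FT h₁ ω‖ ≤ s⁻¹ * A := by
      intro ω
      rw [normFT]
      exact mul_le_mul_of_nonneg_left (norm_integral_mul_eker_le ω) (inv_nonneg.2 hspos.le)
    have hB' : ∀ ω, |ω| * ‖FT h₁ ω‖ ≤ s⁻¹ * B := by
      intro ω
      rw [normFT]
      have h1 : |ω| * (s⁻¹ * ‖K ω‖) = s⁻¹ * ‖(Complex.I * ω) * K ω‖ := by
        rw [norm_mul, normIω]; ring
      rw [h1, ← e2 ω]
      exact mul_le_mul_of_nonneg_left (norm_integral_mul_eker_le ω) (inv_nonneg.2 hspos.le)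
    have hC' : ∀ ω, ω ^ 2 * ‖FT h₁ ω‖ ≤ s⁻¹ * C := by
      intro ω
      rw [normFT]
      have h1 : ω ^ 2 * (s⁻¹ * ‖K ω‖)
          = s⁻¹ * ‖(Complex.I * ω) * ((Complex.I * ω) * K ω)‖ := by
        rw [norm_mul (Complex.I * (ω:ℂ)) (Complex.I * (ω:ℂ) * K ω),
          norm_mul (Complex.I * (ω:ℂ)) (K ω), normIω]
        have habs : |ω| * |ω| = ω ^ 2 := by rw [abs_mul_abs_self, sq]
        calc ω ^ 2 * (s⁻¹ * ‖K ω‖) = (|ω| * |ω|) * (s⁻¹ * ‖K ω‖) := by rw [habs]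
          _ = s⁻¹ * (|ω| * (|ω| * ‖K ω‖)) := by ring
      rw [h1, ← e3 ω]
      exact mul_le_mul_of_nonneg_left (norm_integral_mul_eker_le ω) (inv_nonneg.2 hspos.le)
    have hFnonneg : ∀ ω : ℝ, (0:ℝ) ≤ ‖FT h₁ ω‖ := fun ω => norm_nonneg _
    set t := Real.sqrt (A * C) / B with htdef
    have hACpos : 0 < A * C := mul_pos hApos hCpos
    have hsACpos : 0 < Real.sqrt (A * C) := Real.sqrt_pos.2 hACpos
    have htpos : 0 < t := div_pos hsACpos hBpos
    by_cases hcase : B * B ≤ A * C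
    · -- three-regime case
      have ht1 : 1 ≤ t := by
        rw [htdef, le_div_iff₀ hBpos, one_mul]
        calc B = Real.sqrt (B * B) := (Real.sqrt_mul_self hBpos.le).symm
          _ ≤ Real.sqrt (A * C) := Real.sqrt_le_sqrt hcase
      have hab : B / A ≤ C / B := by
        rw [div_le_div_iff₀ hApos hBpos]
        linarith [hcase]
      have key := full_line (fun ω => ‖FT h₁ ω‖) hFT hFnonneg
        (s⁻¹ * A) (s⁻¹ * B) (s⁻¹ * C) (B / A) (C / B) hA' hB' hC'
        (div_pos hBpos hApos) hab
      have hlogeq : Real.log ((C / B) / (B / A)) = 2 * Real.log t := by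
        have h1 : (C / B) / (B / A) = t ^ 2 := by
          rw [htdef, div_pow, Real.sq_sqrt hACpos.le]
          field_simp
        rw [h1, Real.log_pow]
        norm_num
      have hAne : A ≠ 0 := hApos.ne'
      have hBne : B ≠ 0 := hBpos.ne'
      have hCne : C ≠ 0 := hCpos.ne'
      have hπ : (0:ℝ) < Real.pi := Real.pi_pos
      have hinv : s⁻¹ * s⁻¹ = (2 * Real.pi)⁻¹ := by rw [← mul_inv, hss]
      have hval : s⁻¹ * (2 * ((B / A) * (s⁻¹ * A) + (s⁻¹ * B) * Real.log ((C / B) / (B / A))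
          + (s⁻¹ * C) / (C / B))) = 2 / Real.pi * (1 + Real.log t) * B := by
        have e_a : (B / A) * (s⁻¹ * A) = s⁻¹ * B := by
          field_simp
        have e_c : (s⁻¹ * C) / (C / B) = s⁻¹ * B := by
          field_simp
        rw [hlogeq, e_a, e_c]
        calc s⁻¹ * (2 * (s⁻¹ * B + s⁻¹ * B * (2 * Real.log t) + s⁻¹ * B))
            = (s⁻¹ * s⁻¹) * ((4 + 4 * Real.log t) * B) := by ring
          _ = (2 * Real.pi)⁻¹ * ((4 + 4 * Real.log t) * B) := by rw [hinv]
          _ = 2 / Real.pi * (1 + Real.log t) * B := by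
              rw [mul_inv]
              field_simp
              ring
      have step : (Real.sqrt (2 * Real.pi))⁻¹ * ∫ ω : ℝ, ‖FT h₁ ω‖
          ≤ 2 / Real.pi * (1 + Real.log t) * B := by
        rw [← hsdef, ← hval]
        exact mul_le_mul_of_nonneg_left key (inv_nonneg.2 hspos.le)
      refine step.trans ?_
      have hfac : (0:ℝ) ≤ (1 + Real.log t) * B :=
        mul_nonneg (by linarith [Real.log_nonneg ht1]) hBpos.le
      calc 2 / Real.pi * (1 + Real.log t) * B
          = 2 / Real.pi * ((1 + Real.log t) * B) := by ring
        _ ≤ 2 * Real.sqrt 2 / Real.sqrt Real.pi * ((1 + Real.log t) * B) :=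
            mul_le_mul_of_nonneg_right const_le hfac
        _ = 2 * Real.sqrt 2 / Real.sqrt Real.pi * (1 + Real.log t) * B := by ring
    · -- two-regime case
      push_neg at hcase
      set sa := Real.sqrt A with hsadef
      set sc := Real.sqrt C with hscdef
      have hsa : 0 < sa := Real.sqrt_pos.2 hApos
      have hsc : 0 < sc := Real.sqrt_pos.2 hCpos
      have hsa2 : sa * sa = A := Real.mul_self_sqrt hApos.le
      have hsc2 : sc * sc = C := Real.mul_self_sqrt hCpos.le
      have hsplitAC : Real.sqrt (A * C) = sa * sc := Real.sqrt_mul hApos.le C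
      -- Landau : B ≤ 2 sa sc
      have hland := landau hd2 hd3 hi1 hi2 hi3
        (a := 2 * sa / sc) (by positivity)
      have hlandau : B ≤ 2 * (sa * sc) := by
        have hsq : (2 * sa / sc) ^ 2 / 2 * C = 2 * A := by
          rw [div_pow, mul_pow]
          field_simp
          nlinarith [hsa2, hsc2]
        rw [hsq, ← hAdef, ← hBdef] at hland
        have h4 : 2 * sa / sc * B ≤ 4 * A := by linarith [hland]
        have h5 : 2 * sa * B ≤ 4 * A * sc := by
          have := mul_le_mul_of_nonneg_right h4 hsc.le
          calc 2 * sa * B = 2 * sa / sc * B * sc := by field_simp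
            _ ≤ 4 * A * sc := this
        have h7 : 2 * sa * (2 * (sa * sc)) = 4 * A * sc := by rw [← hsa2]; ring
        have h6 : 2 * sa * B ≤ 2 * sa * (2 * (sa * sc)) := by linarith
        exact le_of_mul_le_mul_left h6 (by positivity)
      have ht2 : 1/2 ≤ t := by
        rw [htdef, hsplitAC, le_div_iff₀ hBpos]
        linarith
      have ht1 : t ≤ 1 := by
        rw [htdef, div_le_one hBpos]
        calc Real.sqrt (A * C) ≤ Real.sqrt (B * B) := Real.sqrt_le_sqrt hcase.le
          _ = B := Real.sqrt_mul_self hBpos.le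
      have key := full_line (fun ω => ‖FT h₁ ω‖) hFT hFnonneg
        (s⁻¹ * A) (s⁻¹ * B) (s⁻¹ * C) (sc / sa) (sc / sa) hA' hB' hC'
        (by positivity) le_rfl
      have hπ : (0:ℝ) < Real.pi := Real.pi_pos
      have hinv : s⁻¹ * s⁻¹ = (2 * Real.pi)⁻¹ := by rw [← mul_inv, hss]
      have hval : s⁻¹ * (2 * ((sc / sa) * (s⁻¹ * A) + (s⁻¹ * B) * Real.log ((sc / sa) / (sc / sa))
          + (s⁻¹ * C) / (sc / sa))) = 2 / Real.pi * (sa * sc) := by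
        have e_a : (sc / sa) * (s⁻¹ * A) = s⁻¹ * (sa * sc) := by
          rw [← hsa2]; field_simp
        have e_c : (s⁻¹ * C) / (sc / sa) = s⁻¹ * (sa * sc) := by
          rw [← hsc2]; field_simp
        rw [div_self (by positivity : (sc / sa) ≠ 0), Real.log_one, mul_zero, add_zero, e_a, e_c]
        calc s⁻¹ * (2 * (s⁻¹ * (sa * sc) + s⁻¹ * (sa * sc)))
            = (s⁻¹ * s⁻¹) * (4 * (sa * sc)) := by ring
          _ = (2 * Real.pi)⁻¹ * (4 * (sa * sc)) := by rw [hinv]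
          _ = 2 / Real.pi * (sa * sc) := by
              rw [mul_inv]
              field_simp
              ring
      have step : (Real.sqrt (2 * Real.pi))⁻¹ * ∫ ω : ℝ, ‖FT h₁ ω‖
          ≤ 2 / Real.pi * (sa * sc) := by
        rw [← hsdef, ← hval]
        exact mul_le_mul_of_nonneg_left key (inv_nonneg.2 hspos.le)
      refine step.trans ?_
      have hnum := numeric ht2 ht1
      have htB : t * B = sa * sc := by
        rw [htdef, hsplitAC]
        field_simp
      have hπ : (0:ℝ) < Real.pi := Real.pi_pos
      calc 2 / Real.pi * (sa * sc) = 2 / Real.pi * (t * B) := by rw [htB]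
        _ ≤ 2 / Real.pi * ((s * (1 + Real.log t)) * B) := by
            apply mul_le_mul_of_nonneg_left _ (by positivity)
            exact mul_le_mul_of_nonneg_right hnum hBpos.le
        _ = (2 / Real.pi * s) * (1 + Real.log t) * B := by ring
        _ = 2 * Real.sqrt 2 / Real.sqrt Real.pi * (1 + Real.log t) * B := by
            rw [hsdef, const_eq]
end

section
/- For any real-valued data (X₁,Y₁),…,(Xₙ,Yₙ) with Yᵢ ∈ {−1,+1}, any sigmoidal activation φ : ℝ → [−1,1] with limits ∓1 at ∓∞, and any k ≤ n with pairwise distinct X₁,…,Xₙ, the quantity mmse*_{k,n} := inf over h in the class H_k^φ of two-layer networks h(x) = c₀ + Σ_{l=1}^k c_l φ(a_l x + b_l) of (1/n) Σᵢ (Yᵢ − tanh(h(Xᵢ)))² satisfies mmse*_{k,n} ≤ 1 − k/n. -/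
open Filter Finset

lemma my_tanh_formula (x : ℝ) :
    Real.tanh x = 1 - 2 / (Real.exp (2*x) + 1) := by
  have h1 : (0:ℝ) < Real.exp x := Real.exp_pos x
  have h2 : Real.exp (2*x) = Real.exp x * Real.exp x := by
    rw [two_mul, Real.exp_add]
  have h3 : (0:ℝ) < Real.exp x * Real.exp x + 1 := by positivity
  rw [Real.tanh_eq_sinh_div_cosh, Real.sinh_eq, Real.cosh_eq, Real.exp_neg, h2]
  field_simp
  ring

lemma my_tanh_tendsto : Tendsto Real.tanh atTop (nhds 1) := by
  have h : Tendsto (fun x : ℝ => 1 - 2 / (Real.exp (2*x) + 1)) atTop (nhds (1 - 0)) := by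
    apply Tendsto.sub tendsto_const_nhds
    apply Tendsto.div_atTop (tendsto_const_nhds)
    apply Filter.tendsto_atTop_add_const_right
    exact Real.tendsto_exp_atTop.comp (tendsto_const_mul_atTop_of_pos (by norm_num : (0:ℝ) < 2) |>.mpr tendsto_id)
  simpa using h.congr (fun x => (my_tanh_formula x).symm)

lemma my_tanh_continuous : Continuous Real.tanh := by
  have : Continuous (fun x : ℝ => 1 - 2 / (Real.exp (2*x) + 1)) := by
    apply Continuous.sub continuous_const
    apply Continuous.div continuous_const
    · continuity
    · intro x; positivity
  exact this.congr (fun x => (my_tanh_formula x).symm)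

lemma final_arith (nk kk e e' : ℝ) (h0 : 0 ≤ kk) (hkn : kk ≤ nk) (he'0 : 0 ≤ e')
    (he' : e' ≤ e/4) : kk*e' + (nk-kk)*(1+3*e') ≤ nk - kk + nk*e := by
  nlinarith

lemma sq_bound_sel (w t e : ℝ) (hb : |w - t| ≤ e) (he0 : 0 ≤ e) (he1 : e ≤ 1) :
    (w - t)^2 ≤ e := by
  have h := abs_le.mp hb
  nlinarith [h.1, h.2]

lemma sq_bound_nonsel (w t e : ℝ) (hw : w = -1 ∨ w = 1) (ht : |t| ≤ e) (he1 : e ≤ 1) :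
    (w - t)^2 ≤ 1 + 3*e := by
  have h := abs_le.mp ht
  rcases hw with rfl | rfl <;> nlinarith [h.1, h.2]

/-- Upper bound `1 − k/n` for the neural network MMSE estimator with
hyperbolic tangent output activation. -/
theorem mmse_star_upper (n k : ℕ) (hn : 0 < n) (hk : k ≤ n)
    (X Y : Fin n → ℝ) (hX : Function.Injective X)
    (hY : ∀ i, Y i = -1 ∨ Y i = 1)
    (φ : ℝ → ℝ) (hφ : ∀ z, φ z ∈ Set.Icc (-1:ℝ) 1)
    (hφt : Filter.Tendsto φ Filter.atTop (nhds 1))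
    (hφb : Filter.Tendsto φ Filter.atBot (nhds (-1))) :
    sInf {r : ℝ | ∃ (c₀ : ℝ) (a b c : Fin k → ℝ),
        r = (1 / (n : ℝ)) *
          ∑ i, (Y i - Real.tanh (c₀ + ∑ l, c l * φ (a l * X i + b l)))^2}
      ≤ 1 - (k : ℝ) / n := by
  set S : Set ℝ := {r : ℝ | ∃ (c₀ : ℝ) (a b c : Fin k → ℝ),
        r = (1 / (n : ℝ)) *
          ∑ i, (Y i - Real.tanh (c₀ + ∑ l, c l * φ (a l * X i + b l)))^2} with hS
  have hn' : (0:ℝ) < n := by exact_mod_cast hn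
  have hbdd : BddBelow S := by
    refine ⟨0, fun r hr => ?_⟩
    obtain ⟨c₀, a, b, c, rfl⟩ := hr
    positivity
  -- sorting permutation
  set σ : Equiv.Perm (Fin n) := Tuple.sort X with hσ
  set Z : Fin n → ℝ := X ∘ σ with hZ
  set W : Fin n → ℝ := fun j => Y (σ j) with hW
  have hsm : StrictMono Z :=
    (Tuple.monotone_sort X).strictMono_of_injective (hX.comp σ.injective)
  have hW1 : ∀ j, W j = -1 ∨ W j = 1 := fun j => hY (σ j)
  -- gap
  obtain ⟨d, hd0, hgap⟩ : ∃ d : ℝ, 0 < d ∧ ∀ j j' : Fin n, j < j' → 2*d ≤ Z j' - Z j := by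
    set T : Finset (Fin n × Fin n) := Finset.univ.filter (fun p => p.1 < p.2) with hT
    by_cases hne : T.Nonempty
    · obtain ⟨p, hp, hmin⟩ := T.exists_min_image (fun p => Z p.2 - Z p.1) hne
      have hplt : p.1 < p.2 := (Finset.mem_filter.mp hp).2
      refine ⟨(Z p.2 - Z p.1)/2, by simpa using sub_pos.mpr (hsm hplt), ?_⟩
      intro j j' hjj
      have : Z p.2 - Z p.1 ≤ Z j' - Z j :=
        hmin (j, j') (Finset.mem_filter.mpr ⟨Finset.mem_univ _, hjj⟩)
      linarith
    · refine ⟨1, one_pos, fun j j' hjj => absurd ⟨(j, j'),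
        Finset.mem_filter.mpr ⟨Finset.mem_univ _, hjj⟩⟩ hne⟩
  -- main estimate: for every ε > 0 there is an element of S below 1 - k/n + ε
  have key : ∀ ε : ℝ, 0 < ε → ∃ r ∈ S, r ≤ 1 - (k:ℝ)/n + ε := by
    intro ε hε
    set ε' : ℝ := min (ε/4) 1 with hε'def
    have hε'0 : 0 < ε' := lt_min (by linarith) one_pos
    have hε'1 : ε' ≤ 1 := min_le_right _ _
    have hε'ε : ε' ≤ ε/4 := min_le_left _ _
    -- choose M
    obtain ⟨M₀, hM₀⟩ := (Metric.tendsto_atTop.mp my_tanh_tendsto) ε' hε'0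
    set M : ℝ := M₀ + 1 with hM
    -- choose δ from continuity of tanh at 0
    obtain ⟨δ₀, hδ₀0, hδ₀⟩ := Metric.continuousAt_iff.mp (my_tanh_continuous.continuousAt (x := 0)) ε' hε'0
    set δ : ℝ := min (δ₀/2) 1 with hδdef
    have hδ0 : 0 < δ := lt_min (by linarith) one_pos
    have hδ1 : δ ≤ 1 := min_le_right _ _
    have hδsmall : ∀ x : ℝ, |x| ≤ δ → |Real.tanh x| ≤ ε' := by
      intro x hx
      have : dist x 0 < δ₀ := by
        simp only [Real.dist_eq, sub_zero]
        calc |x| ≤ δ := hx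
        _ ≤ δ₀/2 := min_le_left _ _
        _ < δ₀ := by linarith
      have := hδ₀ this
      simp only [Real.dist_eq, Real.tanh_zero, sub_zero] at this
      exact this.le
    -- network coefficients
    set e : Fin k → Fin n := fun l => ⟨n - k + l.val, by omega⟩ with he
    set V : ℕ → ℝ := fun m => if h : 1 ≤ m ∧ m ≤ k then M * W (e ⟨m - 1, by omega⟩) else 0 with hV
    set c' : ℕ → ℝ := fun m => (V (m+1) - V m)/2 with hc'
    set cc : Fin k → ℝ := fun l => c' l.val with hcc
    set c₀ : ℝ := ∑ l : Fin k, cc l with hc₀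
    set C : ℝ := ∑ l : Fin k, |cc l| with hC
    have hC0 : 0 ≤ C := Finset.sum_nonneg fun l _ => abs_nonneg _
    set η : ℝ := δ / (C + 1) with hη
    have hη0 : 0 < η := div_pos hδ0 (by linarith)
    -- choose slope A
    obtain ⟨R₁, hR₁⟩ := (Metric.tendsto_atTop.mp hφt) η hη0
    have hφb' : Tendsto (fun z : ℝ => φ (-z)) atTop (nhds (-1)) :=
      hφb.comp tendsto_neg_atTop_atBot
    obtain ⟨R₂, hR₂⟩ := (Metric.tendsto_atTop.mp hφb') η hη0
    set R : ℝ := max R₁ (max R₂ 1) with hR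
    have hR0 : 0 < R := lt_of_lt_of_le one_pos (le_trans (le_max_right _ _) (le_max_right _ _))
    set A : ℝ := R / d with hA
    have hA0 : 0 < A := div_pos hR0 hd0
    have hAd : A * d = R := div_mul_cancel₀ R (ne_of_gt hd0)
    set t : Fin k → ℝ := fun l => Z (e l) - d with ht
    set B : Fin k → ℝ := fun l => -(A * t l) with hB
    -- step values
    set s : Fin k → Fin n → ℝ := fun l j => if n - k + l.val ≤ j.val then 1 else -1 with hs
    have hstep : ∀ (j : Fin n) (l : Fin k), |φ (A * Z j + B l) - s l j| ≤ η := by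
      intro j l
      have harg : A * Z j + B l = A * (Z j - t l) := by rw [hB]; ring
      by_cases hle : n - k + l.val ≤ j.val
      · have helj : e l ≤ j := by
          rw [he]; exact hle
        have hZle : Z (e l) ≤ Z j := hsm.monotone helj
        have h1 : d ≤ Z j - t l := by rw [ht]; simp only; linarith
        have h2 : R ≤ A * (Z j - t l) := by
          calc R = A * d := hAd.symm
          _ ≤ A * (Z j - t l) := by nlinarith
        have := hR₁ (A * (Z j - t l)) (le_trans (le_max_left _ _) h2)
        rw [Real.dist_eq] at this
        rw [harg, hs]
        simp only [hle, if_true]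
        exact this.le
      · have hjl : j < e l := by
          rw [Fin.lt_def]
          simp only [he]
          omega
        have hZgap : 2*d ≤ Z (e l) - Z j := hgap j (e l) hjl
        have h1 : d ≤ t l - Z j := by rw [ht]; simp only; linarith
        have h2 : R ≤ A * (t l - Z j) := by
          calc R = A * d := hAd.symm
          _ ≤ A * (t l - Z j) := by nlinarith
        have h3 : R₂ ≤ A * (t l - Z j) := le_trans (le_trans (le_max_left _ _) (le_max_right _ _)) h2
        have := hR₂ (A * (t l - Z j)) h3
        have hneg : -(A * (t l - Z j)) = A * (Z j - t l) := by ring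
        rw [hneg] at this
        rw [Real.dist_eq] at this
        rw [harg, hs]
        simp only [hle, if_false]
        calc |φ (A * (Z j - t l)) - -1| = |φ (A * (Z j - t l)) - (-1)| := rfl
        _ ≤ η := this.le
    -- exact step-network identity
    have hid : ∀ j : Fin n, c₀ + ∑ l : Fin k, cc l * s l j = V (min k (j.val + 1 + k - n)) := by
      intro j
      have h1 : c₀ + ∑ l : Fin k, cc l * s l j
          = ∑ l : Fin k, (if n - k + l.val ≤ j.val then 2 * cc l else 0) := by
        rw [hc₀, ← Finset.sum_add_distrib]
        apply Finset.sum_congr rfl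
        intro l _
        rw [hs]
        by_cases hle : n - k + l.val ≤ j.val <;> simp [hle] <;> ring
      rw [h1]
      have h2 : ∑ l : Fin k, (if n - k + l.val ≤ j.val then 2 * cc l else 0)
          = ∑ m ∈ Finset.range k, (if n - k + m ≤ j.val then 2 * c' m else 0) := by
        simp only [hcc]
        exact Fin.sum_univ_eq_sum_range (fun m => if n - k + m ≤ j.val then 2 * c' m else 0) k
      rw [h2]
      have hmle : min k (j.val + 1 + k - n) ≤ k := min_le_left _ _
      have h3 : ∑ m ∈ Finset.range k, (if n - k + m ≤ j.val then 2 * c' m else 0)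
          = ∑ m ∈ Finset.range (min k (j.val + 1 + k - n)), 2 * c' m := by
        rw [← Finset.sum_filter]
        apply Finset.sum_congr _ (fun m _ => rfl)
        ext m
        simp only [Finset.mem_filter, Finset.mem_range]
        have hj := j.isLt
        omega
      rw [h3]
      have h4 : ∑ m ∈ Finset.range (min k (j.val + 1 + k - n)), 2 * c' m
          = ∑ m ∈ Finset.range (min k (j.val + 1 + k - n)), (V (m+1) - V m) := by
        apply Finset.sum_congr rfl
        intro m _
        rw [hc']; ring
      rw [h4, Finset.sum_range_sub]
      have hV0 : V 0 = 0 := by rw [hV]; simp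
      rw [hV0, sub_zero]
    -- value of V at the region index
    have hVtarget : ∀ j : Fin n,
        V (min k (j.val + 1 + k - n)) = if n - k ≤ j.val then M * W j else 0 := by
      intro j
      have hj := j.isLt
      by_cases hsel : n - k ≤ j.val
      · have hm : min k (j.val + 1 + k - n) = j.val + 1 + k - n := by omega
        rw [hm]
        simp only [hV]
        have hcond : 1 ≤ j.val + 1 + k - n ∧ j.val + 1 + k - n ≤ k := by omega
        rw [dif_pos hcond]
        have : e ⟨j.val + 1 + k - n - 1, by omega⟩ = j := by
          rw [he]; apply Fin.ext; simp; omega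
        rw [this, if_pos hsel]
      · have hm : min k (j.val + 1 + k - n) = 0 := by omega
        rw [hm]
        simp only [hV]
        rw [dif_neg (by omega), if_neg hsel]
    -- network values
    set hnet : Fin n → ℝ := fun j => c₀ + ∑ l : Fin k, cc l * φ (A * Z j + B l) with hhnet
    have herr : ∀ j : Fin n, |hnet j - (if n - k ≤ j.val then M * W j else 0)| ≤ δ := by
      intro j
      rw [← hVtarget j, ← hid j]
      have : hnet j - (c₀ + ∑ l : Fin k, cc l * s l j)
          = ∑ l : Fin k, cc l * (φ (A * Z j + B l) - s l j) := by
        simp only [hhnet, mul_sub, Finset.sum_sub_distrib]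
        ring
      rw [this]
      calc |∑ l : Fin k, cc l * (φ (A * Z j + B l) - s l j)|
          ≤ ∑ l : Fin k, |cc l * (φ (A * Z j + B l) - s l j)| := Finset.abs_sum_le_sum_abs _ _
      _ ≤ ∑ l : Fin k, |cc l| * η := by
          apply Finset.sum_le_sum
          intro l _
          rw [abs_mul]
          exact mul_le_mul_of_nonneg_left (hstep j l) (abs_nonneg _)
      _ = C * η := by rw [hC, Finset.sum_mul]
      _ ≤ (C + 1) * η := mul_le_mul_of_nonneg_right (by linarith) hη0.le
      _ = δ := by rw [hη]; field_simp
    -- pointwise bound on the loss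
    have hterm : ∀ j : Fin n,
        (W j - Real.tanh (hnet j))^2 ≤ if n - k ≤ j.val then ε' else 1 + 3*ε' := by
      intro j
      by_cases hsel : n - k ≤ j.val
      · rw [if_pos hsel]
        have herrj := herr j
        rw [if_pos hsel] at herrj
        rcases hW1 j with hw | hw
        · -- W j = -1
          have hle : hnet j ≤ -M + δ := by
            rw [hw] at herrj
            have := abs_le.mp herrj
            cases this with
            | intro h1 h2 => linarith
          have hM₀le : M₀ ≤ -hnet j := by rw [hM] at hle; linarith
          have := hM₀ (-hnet j) hM₀le
          rw [Real.dist_eq] at this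
          have htn : Real.tanh (hnet j) = -Real.tanh (-hnet j) := by
            rw [Real.tanh_neg]; ring
          rw [hw, htn]
          have habs : |(-1 : ℝ) - -Real.tanh (-hnet j)| = |Real.tanh (-hnet j) - 1| := by
            have h : (-1 : ℝ) - -Real.tanh (-hnet j) = Real.tanh (-hnet j) - 1 := by ring
            rw [h]
          have hb : |(-1 : ℝ) - -Real.tanh (-hnet j)| ≤ ε' := by rw [habs]; exact this.le
          exact sq_bound_sel _ _ _ hb hε'0.le hε'1
        · -- W j = 1
          have hge : M - δ ≤ hnet j := by
            rw [hw] at herrj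
            have := abs_le.mp herrj
            cases this with
            | intro h1 h2 => linarith
          have hM₀le : M₀ ≤ hnet j := by rw [hM] at hge; linarith
          have := hM₀ (hnet j) hM₀le
          rw [Real.dist_eq] at this
          rw [hw]
          have hb : |(1:ℝ) - Real.tanh (hnet j)| ≤ ε' := by
            rw [← abs_neg]
            have : -((1:ℝ) - Real.tanh (hnet j)) = Real.tanh (hnet j) - 1 := by ring
            rw [this]
            exact (hM₀ (hnet j) hM₀le |>.le).trans_eq' (by rw [Real.dist_eq])
          exact sq_bound_sel _ _ _ hb hε'0.le hε'1
      · rw [if_neg hsel]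
        have herrj := herr j
        rw [if_neg hsel, sub_zero] at herrj
        have htanh : |Real.tanh (hnet j)| ≤ ε' := hδsmall _ herrj
        exact sq_bound_nonsel _ _ _ (hW1 j) htanh hε'1
    -- assemble
    refine ⟨(1 / (n : ℝ)) *
          ∑ i, (Y i - Real.tanh (c₀ + ∑ l, cc l * φ ((fun _ => A) l * X i + B l)))^2,
      ⟨c₀, (fun _ => A), B, cc, rfl⟩, ?_⟩
    have hsum : ∑ i, (Y i - Real.tanh (c₀ + ∑ l, cc l * φ ((fun _ => A) l * X i + B l)))^2
        = ∑ j, (W j - Real.tanh (hnet j))^2 := by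
      rw [← Equiv.sum_comp σ (fun i => (Y i - Real.tanh (c₀ + ∑ l, cc l * φ ((fun _ => A) l * X i + B l)))^2)]
      apply Finset.sum_congr rfl
      intro j _
      rfl
    rw [hsum]
    have hbound : ∑ j, (W j - Real.tanh (hnet j))^2
        ≤ (k:ℝ) * ε' + ((n:ℝ) - k) * (1 + 3*ε') := by
      calc ∑ j, (W j - Real.tanh (hnet j))^2
          ≤ ∑ j : Fin n, (if n - k ≤ j.val then ε' else 1 + 3*ε') :=
            Finset.sum_le_sum (fun j _ => hterm j)
      _ = ∑ m ∈ Finset.range n, (if n - k ≤ m then ε' else 1 + 3*ε') :=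
            Fin.sum_univ_eq_sum_range (fun m => if n - k ≤ m then ε' else 1 + 3*ε') n
      _ = (k:ℝ) * ε' + ((n:ℝ) - k) * (1 + 3*ε') := by
          rw [Finset.sum_ite]
          have hf1 : (Finset.range n).filter (fun m => n - k ≤ m) = Finset.Ico (n-k) n := by
            ext m; simp [Finset.mem_filter, Finset.mem_range, Finset.mem_Ico]; omega
          have hf2 : (Finset.range n).filter (fun m => ¬ (n - k ≤ m)) = Finset.range (n-k) := by
            ext m; simp [Finset.mem_filter, Finset.mem_range]; omega
          rw [hf1, hf2, Finset.sum_const, Finset.sum_const, Nat.card_Ico, Finset.card_range,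
            nsmul_eq_mul, nsmul_eq_mul]
          have h1 : ((n - (n - k) : ℕ) : ℝ) = (k:ℝ) := by
            have : n - (n - k) = k := by omega
            rw [this]
          have h2 : (((n - k) : ℕ) : ℝ) = (n:ℝ) - k := by
            push_cast [Nat.cast_sub hk]; ring
          rw [h1, h2]
    have hkn : (k:ℝ) ≤ (n:ℝ) := by exact_mod_cast hk
    have hk0 : (0:ℝ) ≤ (k:ℝ) := Nat.cast_nonneg k
    have hfinal : (k:ℝ) * ε' + ((n:ℝ) - k) * (1 + 3*ε') ≤ (n:ℝ) - k + (n:ℝ) * ε :=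
      final_arith _ _ _ _ hk0 hkn hε'0.le hε'ε
    calc (1 / (n : ℝ)) * ∑ j, (W j - Real.tanh (hnet j))^2
        ≤ (1 / (n : ℝ)) * ((n:ℝ) - k + (n:ℝ) * ε) := by
          apply mul_le_mul_of_nonneg_left _ (by positivity)
          exact hbound.trans hfinal
    _ = 1 - (k:ℝ)/n + ε := by field_simp
  refine le_of_forall_pos_le_add fun ε hε => ?_
  obtain ⟨r, hr, hle⟩ := key ε hε
  exact (csInf_le hbdd hr).trans hle
end

section
/- Let g : ℝ → ℝ be a step function g(x) = Σ_{l=0}^{k} s_l · 1_{[t_l, t_{l+1})}(x) with s_l ∈ {−1, 0, +1} and −∞ = t₀ < t₁ < ⋯ < t_k < t_{k+1} = ∞. For every ε, δ > 0 there exist coefficients a_l, b_l, c_l ∈ ℝ (l = 0,…,k) such that the two-layer network h(x) = c₀ + Σ_{l=1}^k c_l φ(a_l x + b_l), with φ : ℝ → [−1,1] sigmoidal (φ(z) → ±1 as z → ±∞), satisfies |g(x) − tanh(h(x))| ≤ ε for all x outside the union of the intervals (t_l − δ, t_l + δ), l = 1,…,k. -/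
private lemma myHasDerivAt_tanh (x : ℝ) :
    HasDerivAt Real.tanh ((Real.cosh x * Real.cosh x - Real.sinh x * Real.sinh x) / Real.cosh x ^ 2) x := by
  have h := (Real.hasDerivAt_sinh x).div (Real.hasDerivAt_cosh x) (ne_of_gt (Real.cosh_pos x))
  have e1 : (Real.sinh / Real.cosh) = Real.tanh := by
    funext y; simp only [Pi.div_apply]; rw [Real.tanh_eq_sinh_div_cosh]
  rwa [e1] at h

private lemma tanh_lip (a b : ℝ) : |Real.tanh a - Real.tanh b| ≤ |a - b| := by
  have h : ∀ y ∈ Set.univ, HasDerivWithinAt Real.tanh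
      ((Real.cosh y * Real.cosh y - Real.sinh y * Real.sinh y) / Real.cosh y ^ 2) Set.univ y :=
    fun y _ => (myHasDerivAt_tanh y).hasDerivWithinAt
  have hb : ∀ y ∈ Set.univ,
      ‖(Real.cosh y * Real.cosh y - Real.sinh y * Real.sinh y) / Real.cosh y ^ 2‖ ≤ 1 := by
    intro y _
    have h1 : Real.cosh y * Real.cosh y - Real.sinh y * Real.sinh y = 1 := by
      nlinarith [Real.cosh_sq_sub_sinh_sq y]
    rw [h1, Real.norm_eq_abs, abs_of_nonneg (by positivity), div_le_one (by positivity)]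
    nlinarith [Real.one_le_cosh y]
  have := Convex.norm_image_sub_le_of_norm_hasDerivWithin_le h hb convex_univ
    (Set.mem_univ b) (Set.mem_univ a)
  simpa [Real.norm_eq_abs] using this

private lemma tanh_le_one (x : ℝ) : Real.tanh x ≤ 1 := by
  rw [Real.tanh_eq_sinh_div_cosh, div_le_one (Real.cosh_pos x)]
  exact (Real.sinh_lt_cosh x).le

private lemma one_sub_tanh (ζ : ℝ) (hζ : 0 < ζ) : 1 - Real.tanh ζ ≤ 1 / ζ := by
  have h1 : 1 - Real.tanh ζ = Real.exp (-ζ) / Real.cosh ζ := by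
    rw [Real.tanh_eq_sinh_div_cosh, ← Real.cosh_sub_sinh]
    field_simp
  have h2 : Real.exp ζ / 2 ≤ Real.cosh ζ := by
    rw [Real.cosh_eq]; linarith [Real.exp_pos (-ζ)]
  have h3 : Real.exp (-ζ) * Real.exp ζ = 1 := by rw [← Real.exp_add]; simp
  have h4 : 2 * ζ + 1 ≤ Real.exp ζ * Real.exp ζ := by
    have h := Real.add_one_le_exp (2 * ζ)
    rw [two_mul, Real.exp_add] at h
    linarith
  rw [h1, div_le_div_iff₀ (Real.cosh_pos ζ) hζ]
  nlinarith [Real.exp_pos ζ, Real.exp_pos (-ζ), Real.cosh_pos ζ]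

/-- A `{−1,0,+1}`-valued step function with `k` thresholds can be uniformly
approximated, away from its thresholds, by `tanh` of a two-layer neural
network of size `k`. -/
theorem step_function_approx (k : ℕ)
    (s : Fin (k+1) → ℝ) (hs : ∀ l, s l = -1 ∨ s l = 0 ∨ s l = 1)
    (t : Fin k → ℝ) (ht : StrictMono t)
    (g : ℝ → ℝ)
    (hg : ∀ x : ℝ, ∀ l : Fin (k+1),
      (∀ j : Fin k, ((j : ℕ) < (l : ℕ) ↔ t j ≤ x)) → g x = s l)
    (φ : ℝ → ℝ) (hφr : ∀ z, φ z ∈ Set.Icc (-1:ℝ) 1)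
    (hφt : Filter.Tendsto φ Filter.atTop (nhds 1))
    (hφb : Filter.Tendsto φ Filter.atBot (nhds (-1)))
    (ε δ : ℝ) (hε : 0 < ε) (hδ : 0 < δ) :
    ∃ (c₀ : ℝ) (a b c : Fin k → ℝ), ∀ x : ℝ,
      (∀ j : Fin k, δ ≤ |x - t j|) →
      |g x - Real.tanh (c₀ + ∑ l, c l * φ (a l * x + b l))| ≤ ε := by
  -- the steepness parameter ζ
  set ζ : ℝ := max 1 (2 / ε) with hζdef
  have hζ1 : (1:ℝ) ≤ ζ := le_max_left _ _
  have hζ0 : (0:ℝ) < ζ := lt_of_lt_of_le one_pos hζ1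
  have htail : 1 - Real.tanh ζ ≤ ε / 2 := by
    have h1 := one_sub_tanh ζ hζ0
    have h2 : 2 / ε ≤ ζ := le_max_right _ _
    rw [div_le_iff₀ hε] at h2
    have h3 : 1 / ζ ≤ ε / 2 := by
      rw [div_le_div_iff₀ hζ0 (by norm_num : (0:ℝ) < 2)]
      nlinarith
    linarith
  -- the accuracy η for φ
  set η : ℝ := ε / (2 * (k + 1) * ζ) with hηdef
  have hη0 : 0 < η := by positivity
  have hsum : (k : ℝ) * (ζ * η) ≤ ε / 2 := by
    have he : (k:ℝ) * (ζ * η) = ε * k / (2 * (k+1)) := by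
      rw [hηdef]; field_simp
    rw [he, div_le_div_iff₀ (by positivity) (by norm_num : (0:ℝ) < 2)]
    have hk : (0:ℝ) ≤ (k:ℝ) := Nat.cast_nonneg k
    nlinarith
  -- thresholds for φ being η-close to ±1
  obtain ⟨M, hM⟩ : ∃ M : ℝ, ∀ y, M ≤ y → |φ y - 1| ≤ η := by
    obtain ⟨N, hN⟩ := Metric.tendsto_atTop.mp hφt η hη0
    exact ⟨N, fun y hy => le_of_lt (by simpa [Real.dist_eq] using hN y hy)⟩
  obtain ⟨m₀, hm₀⟩ : ∃ m₀ : ℝ, ∀ y, y ≤ m₀ → |φ y + 1| ≤ η := by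
    have h : ∀ᶠ y in Filter.atBot, φ y ∈ Metric.closedBall (-1:ℝ) η :=
      hφb.eventually (Metric.closedBall_mem_nhds _ hη0)
    obtain ⟨m₀, hm₀⟩ := Filter.eventually_atBot.mp h
    refine ⟨m₀, fun y hy => ?_⟩
    have := hm₀ y hy
    rw [Metric.mem_closedBall, Real.dist_eq] at this
    simpa [sub_neg_eq_add] using this
  -- the slope z
  set z : ℝ := max (max (M / δ) (-m₀ / δ)) 1 with hzdef
  have hz1 : (1:ℝ) ≤ z := le_max_right _ _
  have hz0 : (0:ℝ) < z := lt_of_lt_of_le one_pos hz1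
  have hzM : M ≤ z * δ := by
    have h : M / δ ≤ z := le_trans (le_max_left _ _) (le_max_left _ _)
    rwa [div_le_iff₀ hδ] at h
  have hzm : -(z * δ) ≤ m₀ := by
    have h : -m₀ / δ ≤ z := le_trans (le_max_right _ _) (le_max_left _ _)
    rw [div_le_iff₀ hδ] at h
    linarith
  -- the jumps
  set d : Fin k → ℝ := fun l => s l.succ - s l.castSucc with hd
  have hdabs : ∀ l, |d l| ≤ 2 := by
    intro l
    have h1 := hs l.succ; have h2 := hs l.castSucc
    have : d l = s l.succ - s l.castSucc := rfl
    rw [this]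
    rcases h1 with h1|h1|h1 <;> rcases h2 with h2|h2|h2 <;> rw [h1, h2] <;> norm_num
  refine ⟨ζ * s 0 + ∑ l, ζ * d l / 2, fun _ => z, fun l => -(z * t l),
    fun l => ζ * d l / 2, ?_⟩
  intro x hx
  -- the level m of x
  set S : Finset (Fin k) := Finset.univ.filter (fun j => t j ≤ x) with hS
  set m : ℕ := S.card with hm
  have hmk : m ≤ k := by
    have := Finset.card_filter_le (Finset.univ : Finset (Fin k)) (fun j => t j ≤ x)
    simpa [hS, hm] using this
  have hLlt : m < k + 1 := Nat.lt_succ_of_le hmk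
  have hiff : ∀ j : Fin k, ((j:ℕ) < m ↔ t j ≤ x) := by
    intro j
    constructor
    · intro hj
      by_contra htj
      have hsub : S ⊆ Finset.Iio j := by
        intro i hi
        rw [hS, Finset.mem_filter] at hi
        rw [Finset.mem_Iio]
        by_contra hij
        push_neg at hij
        exact htj (le_trans (ht.monotone hij) hi.2)
      have hcard := Finset.card_le_card hsub
      rw [Fin.card_Iio] at hcard
      omega
    · intro hj
      have hsub : Finset.Iic j ⊆ S := by
        intro i hi
        rw [Finset.mem_Iic] at hi
        rw [hS, Finset.mem_filter]
        exact ⟨Finset.mem_univ _, le_trans (ht.monotone hi) hj⟩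
      have hcard := Finset.card_le_card hsub
      rw [Fin.card_Iic] at hcard
      omega
  have hgx : g x = s ⟨m, hLlt⟩ := hg x ⟨m, hLlt⟩ hiff
  -- telescoping identity
  have htel : ∀ n (hn : n ≤ k), s ⟨n, Nat.lt_succ_of_le hn⟩ =
      s 0 + ∑ l : Fin k, (if (l:ℕ) < n then d l else 0) := by
    intro n
    induction n with
    | zero => intro _; simp
    | succ n ih =>
      intro hn
      have hn' : n ≤ k := Nat.le_of_succ_le hn
      have hnk : n < k := hn
      have hsplit : ∀ l : Fin k, (if (l:ℕ) < n+1 then d l else 0) =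
          (if (l:ℕ) < n then d l else 0) + (if (l:ℕ) = n then d l else 0) := by
        intro l
        by_cases h1 : (l:ℕ) < n
        · rw [if_pos h1, if_pos (by omega), if_neg (by omega)]; ring
        · by_cases h2 : (l:ℕ) = n
          · rw [if_pos (by omega), if_neg h1, if_pos h2]; ring
          · rw [if_neg (by omega), if_neg h1, if_neg h2]; ring
      rw [Finset.sum_congr rfl (fun l _ => hsplit l), Finset.sum_add_distrib]
      have hone : ∑ l : Fin k, (if (l:ℕ) = n then d l else 0) = d ⟨n, hnk⟩ := by
        rw [Finset.sum_eq_single (⟨n, hnk⟩ : Fin k)]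
        · simp
        · intro b _ hb; rw [if_neg]; intro hbn; exact hb (Fin.ext hbn)
        · intro h; exact absurd (Finset.mem_univ _) h
      rw [hone]
      have hval : d ⟨n, hnk⟩ = s ⟨n+1, Nat.lt_succ_of_le hn⟩ - s ⟨n, Nat.lt_succ_of_le hn'⟩ := rfl
      linarith [ih hn', hval]
  -- per-term error bound
  have hterm : ∀ l : Fin k,
      |ζ * d l / 2 * φ (z * x + -(z * t l)) + ζ * d l / 2
        - ζ * (if (l:ℕ) < m then d l else 0)| ≤ ζ * η := by
    intro l
    have hδl := hx l
    have hcd : |ζ * d l / 2| ≤ ζ := by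
      rw [abs_div, abs_mul, abs_of_pos hζ0, (by norm_num : |(2:ℝ)| = 2)]
      nlinarith [hdabs l, abs_nonneg (d l)]
    by_cases hlm : (l:ℕ) < m
    · have htl : t l ≤ x := (hiff l).mp hlm
      have hge : δ ≤ x - t l := by
        rwa [abs_of_nonneg (by linarith)] at hδl
      have harg : M ≤ z * x + -(z * t l) := by
        have h := mul_le_mul_of_nonneg_left hge hz0.le
        nlinarith
      have hφ1 := hM _ harg
      rw [if_pos hlm]
      have he : ζ * d l / 2 * φ (z * x + -(z * t l)) + ζ * d l / 2 - ζ * d l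
          = (ζ * d l / 2) * (φ (z * x + -(z * t l)) - 1) := by ring
      rw [he, abs_mul]
      exact mul_le_mul hcd hφ1 (abs_nonneg _) hζ0.le
    · have htl : x < t l := not_le.mp (fun h => hlm ((hiff l).mpr h))
      have hge : x - t l ≤ -δ := by
        rw [abs_of_neg (by linarith)] at hδl
        linarith
      have harg : z * x + -(z * t l) ≤ m₀ := by
        have h := mul_le_mul_of_nonneg_left hge hz0.le
        nlinarith
      have hφ1 := hm₀ _ harg
      rw [if_neg hlm]
      have he : ζ * d l / 2 * φ (z * x + -(z * t l)) + ζ * d l / 2 - ζ * 0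
          = (ζ * d l / 2) * (φ (z * x + -(z * t l)) + 1) := by ring
      rw [he, abs_mul]
      exact mul_le_mul hcd hφ1 (abs_nonneg _) hζ0.le
  -- the network value
  set hval : ℝ := (ζ * s 0 + ∑ l, ζ * d l / 2)
      + ∑ l : Fin k, (ζ * d l / 2) * φ (z * x + -(z * t l)) with hhval
  -- total error between network and ζ · g x
  have hdiff : |hval - ζ * s ⟨m, hLlt⟩| ≤ (k:ℝ) * (ζ * η) := by
    have hre : hval - ζ * s ⟨m, hLlt⟩
        = ∑ l : Fin k, (ζ * d l / 2 * φ (z * x + -(z * t l)) + ζ * d l / 2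
            - ζ * (if (l:ℕ) < m then d l else 0)) := by
      rw [hhval, htel m hmk, Finset.sum_sub_distrib, Finset.sum_add_distrib,
        mul_add, Finset.mul_sum]
      ring
    rw [hre]
    calc |∑ l : Fin k, (ζ * d l / 2 * φ (z * x + -(z * t l)) + ζ * d l / 2
            - ζ * (if (l:ℕ) < m then d l else 0))|
        ≤ ∑ l : Fin k, |ζ * d l / 2 * φ (z * x + -(z * t l)) + ζ * d l / 2
            - ζ * (if (l:ℕ) < m then d l else 0)| := Finset.abs_sum_le_sum_abs _ _
      _ ≤ ∑ _l : Fin k, ζ * η := Finset.sum_le_sum (fun l _ => hterm l)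
      _ = (k:ℝ) * (ζ * η) := by
          rw [Finset.sum_const, Finset.card_univ, Fintype.card_fin, nsmul_eq_mul]
  -- closeness of g x to tanh (ζ · g x)
  have h1 : |g x - Real.tanh (ζ * g x)| ≤ ε / 2 := by
    rw [hgx]
    rcases hs ⟨m, hLlt⟩ with h'|h'|h' <;> rw [h']
    · rw [(by ring : ζ * (-1) = -ζ), Real.tanh_neg,
        (by ring : (-1:ℝ) - -Real.tanh ζ = -(1 - Real.tanh ζ)), abs_neg,
        abs_of_nonneg (by linarith [tanh_le_one ζ])]
      exact htail
    · simp [Real.tanh_zero]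
      linarith
    · rw [mul_one, abs_of_nonneg (by linarith [tanh_le_one ζ])]
      exact htail
  -- conclusion
  have hgoal : |g x - Real.tanh hval| ≤ ε := by
    calc |g x - Real.tanh hval|
        ≤ |g x - Real.tanh (ζ * g x)| + |Real.tanh (ζ * g x) - Real.tanh hval| :=
          abs_sub_le _ _ _
      _ ≤ ε / 2 + |ζ * g x - hval| := add_le_add h1 (tanh_lip _ _)
      _ ≤ ε / 2 + (k:ℝ) * (ζ * η) := by
          refine add_le_add le_rfl ?_
          rw [hgx, abs_sub_comm]
          exact hdiff
      _ ≤ ε := by linarith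
  exact hgoal
end
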